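/- Let F(a₁,…,a_m) be a free group with free basis a₁,…,a_m and let F(a,b) be a free group with free basis a, b. Then the group homomorphism μ : F(a₁,…,a_m) → F(a,b) determined by μ(a_i) = aⁱbⁱa⁻ⁱb⁻ⁱ for i = 1,…,m is injective. -/

import Mathlib

open List

namespace InjMuAux

variable {α : Type*} [DecidableEq α]

/-- The no-cancellation relation on letters of a word in a free group. -/
def NC {α : Type*} : (α × Bool) → (α × Bool) → Prop :=
  fun a b => ¬(a.1 = b.1 ∧ a.2 = !b.2)

theorem chain'_nc_reduce (L : List (α × Bool)) : Chain' NC (FreeGroup.reduce L) := by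
  induction L with
  | nil => exact isChain_nil
  | cons a L ih =>
    rw [FreeGroup.reduce.cons]
    cases h : FreeGroup.reduce L with
    | nil => exact isChain_singleton _
    | cons b tl =>
      rw [h] at ih
      show Chain' NC (if a.1 = b.1 ∧ a.2 = !b.2 then tl else a :: b :: tl)
      by_cases hc : a.1 = b.1 ∧ a.2 = !b.2
      · rw [if_pos hc]; exact ih.tail
      · rw [if_neg hc]; exact isChain_cons_cons.2 ⟨hc, ih⟩

theorem reduce_eq_self_of_chain' {L : List (α × Bool)} (h : Chain' NC L) :
    FreeGroup.reduce L = L := by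
  induction L with
  | nil => rfl
  | cons a L ih =>
    rw [FreeGroup.reduce.cons, ih h.tail]
    cases L with
    | nil => rfl
    | cons b tl =>
        show (if a.1 = b.1 ∧ a.2 = !b.2 then tl else a :: b :: tl) = a :: b :: tl
        rw [if_neg (isChain_cons_cons.1 h).1]

theorem chain'_nc_toWord (w : FreeGroup α) : Chain' NC w.toWord := by
  rw [← FreeGroup.reduce_toWord]; exact chain'_nc_reduce _

theorem toWord_mk_of_chain' {L : List (α × Bool)} (h : Chain' NC L) :
    (FreeGroup.mk L).toWord = L := by
  rw [FreeGroup.toWord_mk, reduce_eq_self_of_chain' h]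

theorem pow_eq_mk (x : α) (n : ℕ) :
    (FreeGroup.of x) ^ n = FreeGroup.mk (replicate n (x, true)) := by
  rw [← FreeGroup.toWord_of_pow x n, FreeGroup.mk_toWord]

theorem inv_pow_eq_mk (x : α) (n : ℕ) :
    ((FreeGroup.of x) ^ n)⁻¹ = FreeGroup.mk (replicate n (x, false)) := by
  rw [pow_eq_mk, FreeGroup.inv_mk]
  congr 1
  simp [FreeGroup.invRev]

omit [DecidableEq α] in
theorem chain'_replicate_append {P : (α × Bool) → (α × Bool) → Prop} {a : α × Bool}
    {l : List (α × Bool)} (hP : P a a) (hl : Chain' P l) (hhd : ∀ c ∈ l.head?, P a c)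
    (n : ℕ) : Chain' P (replicate n a ++ l) := by
  induction n with
  | zero => simpa
  | succ n ih =>
    rw [replicate_succ, cons_append]
    simp only [Chain']
    rw [isChain_cons]
    refine ⟨?_, ih⟩
    intro c hc
    cases n with
    | zero => exact hhd c (by simpa using hc)
    | succ m => simp [replicate_succ] at hc; subst hc; exact hP

/-- The key ping-pong computation: if the reduced word of `w` does not start with
`(!x)ⁿ⁺¹ x`, then the reduced word of `xⁿ⁺¹ (!x)ⁿ⁺¹ x⁻ⁿ⁻¹ (!x)⁻ⁿ⁻¹ w` starts with
`xⁿ⁺¹ (!x)`. -/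
theorem key (x : Bool) (n : ℕ) (w : FreeGroup Bool)
    (hw : ¬ (replicate (n + 1) (!x, true) ++ [(x, true)] <+: w.toWord)) :
    replicate (n + 1) (x, true) ++ [(!x, true)] <+:
      ((FreeGroup.of x) ^ (n + 1) * (FreeGroup.of (!x)) ^ (n + 1) *
        ((FreeGroup.of x) ^ (n + 1))⁻¹ * ((FreeGroup.of (!x)) ^ (n + 1))⁻¹ * w).toWord := by
  set W := w.toWord with hW
  have hWc : Chain' NC W := chain'_nc_toWord w
  set p : Bool × Bool → Bool := fun q => decide (q = ((!x, true) : Bool × Bool)) with hp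
  set k := (W.takeWhile p).length with hk
  have htake : W.takeWhile p = replicate k (!x, true) := by
    rw [eq_replicate_iff]
    exact ⟨rfl, fun b hb => by simpa [hp] using mem_takeWhile_imp hb⟩
  have hsplit : W = replicate k (!x, true) ++ W.dropWhile p := by
    rw [← htake, takeWhile_append_dropWhile]
  have hwa : w = FreeGroup.mk W := (FreeGroup.mk_toWord).symm
  by_cases hkn : n + 1 ≤ k
  · -- full cancellation of the `(of (!x))^(n+1)` block
    set V := W.drop (n+1) with hV
    have hpre : take (n+1) W = replicate (n+1) (!x, true) := by
      conv_lhs => rw [hsplit]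
      rw [take_append, take_replicate, length_replicate,
        Nat.sub_eq_zero_of_le hkn, take_zero, append_nil, Nat.min_eq_left hkn]
    have hWrep : W = replicate (n+1) (!x, true) ++ V := by
      conv_lhs => rw [← take_append_drop (n+1) W]
      rw [hpre]
    have hVhead : ∀ c ∈ V.head?, c ≠ (x, true) := by
      intro c hc hcx
      subst hcx
      apply hw
      cases hV2 : V with
      | nil => rw [hV2] at hc; simp at hc
      | cons c' V' =>
          rw [hV2] at hc
          simp at hc
          subst hc
          refine ⟨V', ?_⟩
          rw [append_assoc, singleton_append, ← hV2, ← hWrep]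
    set R := replicate (n+1) ((x, true) : Bool × Bool) ++
      (replicate (n+1) ((!x, true) : Bool × Bool) ++
        (replicate (n+1) ((x, false) : Bool × Bool) ++ V)) with hR
    have hg : (FreeGroup.of x) ^ (n + 1) * (FreeGroup.of (!x)) ^ (n + 1) *
        ((FreeGroup.of x) ^ (n + 1))⁻¹ * ((FreeGroup.of (!x)) ^ (n + 1))⁻¹ * w
        = FreeGroup.mk R := by
      rw [hwa, hWrep, ← FreeGroup.mul_mk, ← pow_eq_mk, mul_assoc, inv_mul_cancel_left,
        inv_pow_eq_mk, pow_eq_mk, pow_eq_mk, FreeGroup.mul_mk, FreeGroup.mul_mk,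
        FreeGroup.mul_mk, hR]
      congr 1
      simp [append_assoc]
    have hRc : Chain' NC R := by
      refine chain'_replicate_append (by simp [NC]) ?_ ?_ _
      · refine chain'_replicate_append (by simp [NC]) ?_ ?_ _
        · refine chain'_replicate_append (by simp [NC]) (hWc.drop _) ?_ _
          intro c hc
          obtain ⟨c1, c2⟩ := c
          rintro ⟨h1, h2⟩
          simp only at h1 h2
          cases c2
          · simp at h2
          · exact hVhead _ hc (by rw [← h1])
        · intro c hc
          simp [replicate_succ] at hc
          subst hc
          simp [NC]
      · intro c hc
        simp [replicate_succ] at hc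
        subst hc
        simp [NC]
    rw [hg, toWord_mk_of_chain' hRc, hR]
    refine ⟨replicate n ((!x, true) : Bool × Bool) ++
      (replicate (n+1) ((x, false) : Bool × Bool) ++ V), ?_⟩
    simp [replicate_succ, append_assoc]
  · -- partial cancellation
    push_neg at hkn
    obtain ⟨j, hj⟩ : ∃ j, n + 1 = k + (j + 1) := ⟨n - k, by omega⟩
    set V := W.dropWhile p with hV
    have hVc : Chain' NC V := hWc.suffix (dropWhile_suffix p)
    have hVhead : ∀ c ∈ V.head?, c ≠ (!x, true) := by
      intro c hc
      have h2 := head?_dropWhile_not p W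
      rw [Option.mem_def] at hc
      rw [← hV, hc] at h2
      simpa [hp] using h2
    set R := replicate (n+1) ((x, true) : Bool × Bool) ++
      (replicate (n+1) ((!x, true) : Bool × Bool) ++
        (replicate (n+1) ((x, false) : Bool × Bool) ++
          (replicate (j+1) ((!x, false) : Bool × Bool) ++ V))) with hR
    have hyk : ((FreeGroup.of (!x)) ^ (n+1))⁻¹ * (FreeGroup.of (!x)) ^ k
        = ((FreeGroup.of (!x)) ^ (j+1))⁻¹ := by
      have h1 : (FreeGroup.of (!x)) ^ (n+1)
          = (FreeGroup.of (!x)) ^ k * (FreeGroup.of (!x)) ^ (j+1) := by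
        rw [← pow_add, hj]
      rw [h1]
      group
    have hg : (FreeGroup.of x) ^ (n + 1) * (FreeGroup.of (!x)) ^ (n + 1) *
        ((FreeGroup.of x) ^ (n + 1))⁻¹ * ((FreeGroup.of (!x)) ^ (n + 1))⁻¹ * w
        = FreeGroup.mk R := by
      rw [hwa]
      conv_lhs => rw [hsplit]
      rw [← FreeGroup.mul_mk, ← pow_eq_mk, ← mul_assoc,
        mul_assoc ((FreeGroup.of x) ^ (n + 1) * (FreeGroup.of (!x)) ^ (n + 1) *
          ((FreeGroup.of x) ^ (n + 1))⁻¹) (((FreeGroup.of (!x)) ^ (n + 1))⁻¹)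
          ((FreeGroup.of (!x)) ^ k),
        hyk, inv_pow_eq_mk, inv_pow_eq_mk, pow_eq_mk, pow_eq_mk,
        FreeGroup.mul_mk, FreeGroup.mul_mk, FreeGroup.mul_mk, FreeGroup.mul_mk, hR]
      congr 1
      simp [append_assoc]
    have hRc : Chain' NC R := by
      refine chain'_replicate_append (by simp [NC]) ?_ ?_ _
      · refine chain'_replicate_append (by simp [NC]) ?_ ?_ _
        · refine chain'_replicate_append (by simp [NC]) ?_ ?_ _
          · refine chain'_replicate_append (by simp [NC]) hVc ?_ _
            intro c hc
            obtain ⟨c1, c2⟩ := c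
            rintro ⟨h1, h2⟩
            simp only at h1 h2
            cases c2
            · simp at h2
            · exact hVhead _ hc (by rw [← h1])
          · intro c hc
            simp [replicate_succ] at hc
            subst hc
            simp [NC]
        · intro c hc
          simp [replicate_succ] at hc
          subst hc
          simp [NC]
      · intro c hc
        simp [replicate_succ] at hc
        subst hc
        simp [NC]
    rw [hg, toWord_mk_of_chain' hRc, hR]
    refine ⟨replicate n ((!x, true) : Bool × Bool) ++
      (replicate (n+1) ((x, false) : Bool × Bool) ++
        (replicate (j+1) ((!x, false) : Bool × Bool) ++ V)), ?_⟩
    simp [replicate_succ, append_assoc]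

theorem prefix_head {α : Type*} {a b : α} {n : ℕ} {L : List α}
    (h : replicate (n+1) a ++ [b] <+: L) (h0 : 0 < L.length) : L[0] = a := by
  have h1 : (replicate (n+1) a ++ [b])[0]'(by simp) = a := by
    rw [getElem_append_left (by simp), getElem_replicate]
  rw [← h.getElem (by simp)]
  exact h1

theorem prefix_rep_eq {α : Type*} {a b : α} (hab : a ≠ b) {n m : ℕ} {L : List α}
    (h1 : replicate (n+1) a ++ [b] <+: L) (h2 : replicate (m+1) a ++ [b] <+: L) :
    n = m := by
  by_contra hnm
  wlog h : n < m generalizing n m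
  · exact this h2 h1 (Ne.symm hnm) (by omega)
  have hpp : replicate (n+1) a ++ [b] <+: replicate (m+1) a ++ [b] := by
    rcases prefix_or_prefix_of_prefix h1 h2 with hp | hp
    · exact hp
    · have := IsPrefix.length_le hp
      simp at this
      omega
  have e1 : (replicate (n+1) a ++ [b])[n+1]'(by simp) = b := by
    rw [getElem_append_right (by simp)]
    simp
  have e2 : (replicate (m+1) a ++ [b])[n+1]'(by simp; omega) = a := by
    rw [getElem_append_left (by simp; omega), getElem_replicate]
  rw [hpp.getElem (by simp)] at e1
  rw [e1] at e2
  exact hab e2.symm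

theorem injective_aux (N : ℕ) :
    Function.Injective
      (FreeGroup.lift (fun i : Fin (N + 2) =>
        FreeGroup.of true ^ ((i : ℕ) + 1) * FreeGroup.of false ^ ((i : ℕ) + 1) *
          (FreeGroup.of true ^ ((i : ℕ) + 1))⁻¹ *
          (FreeGroup.of false ^ ((i : ℕ) + 1))⁻¹) :
        FreeGroup (Fin (N + 2)) →* FreeGroup Bool) := by
  apply FreeGroup.injective_lift_of_ping_pong _
    (fun i : Fin (N+2) => {w : FreeGroup Bool |
      replicate ((i : ℕ) + 1) ((true, true) : Bool × Bool) ++ [((false, true) : Bool × Bool)]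
        <+: w.toWord})
    (fun i : Fin (N+2) => {w : FreeGroup Bool |
      replicate ((i : ℕ) + 1) ((false, true) : Bool × Bool) ++ [((true, true) : Bool × Bool)]
        <+: w.toWord})
  · -- nonempty
    intro i
    refine ⟨FreeGroup.mk (replicate ((i : ℕ) + 1) ((true, true) : Bool × Bool) ++
      [((false, true) : Bool × Bool)]), ?_⟩
    show _ <+: _
    have hc : Chain' NC (replicate ((i : ℕ) + 1) ((true, true) : Bool × Bool) ++
        [((false, true) : Bool × Bool)]) :=
      chain'_replicate_append (by simp [NC]) (isChain_singleton _) (by simp [NC]) _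
    rw [toWord_mk_of_chain' hc]
  · -- X pairwise disjoint
    intro i j hij
    rw [Function.onFun, Set.disjoint_left]
    intro w hwi hwj
    exact hij (Fin.ext (by
      have := prefix_rep_eq (by simp) hwi hwj
      omega))
  · -- Y pairwise disjoint
    intro i j hij
    rw [Function.onFun, Set.disjoint_left]
    intro w hwi hwj
    exact hij (Fin.ext (by
      have := prefix_rep_eq (by simp) hwi hwj
      omega))
  · -- X and Y disjoint
    intro i j
    rw [Set.disjoint_left]
    intro w hwi hwj
    have hlen : 0 < w.toWord.length := by
      rcases hwi with ⟨t, ht⟩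
      rw [← ht]
      simp
    have h1 := prefix_head hwi hlen
    have h2 := prefix_head hwj hlen
    rw [h1] at h2
    simp at h2
  · -- ping
    intro i z hz
    obtain ⟨u, hu, rfl⟩ := hz
    simp only [smul_eq_mul]
    exact key true (i : ℕ) u hu
  · -- pong
    intro i z hz
    obtain ⟨u, hu, rfl⟩ := hz
    simp only [smul_eq_mul, Pi.inv_apply]
    rw [show (FreeGroup.of true ^ ((i : ℕ) + 1) * FreeGroup.of false ^ ((i : ℕ) + 1) *
          (FreeGroup.of true ^ ((i : ℕ) + 1))⁻¹ *
          (FreeGroup.of false ^ ((i : ℕ) + 1))⁻¹)⁻¹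
        = FreeGroup.of false ^ ((i : ℕ) + 1) * FreeGroup.of true ^ ((i : ℕ) + 1) *
          (FreeGroup.of false ^ ((i : ℕ) + 1))⁻¹ *
          (FreeGroup.of true ^ ((i : ℕ) + 1))⁻¹ from by group]
    exact key false (i : ℕ) u hu

end InjMuAux

/-- The homomorphism `μ : F(a₁,…,a_m) → F(a,b)` determined by
`μ(aᵢ) = aⁱbⁱa⁻ⁱb⁻ⁱ` (for `i = 1,…,m`) is injective. Here `F(a₁,…,a_m)` is the free
group on `Fin m` (with `aᵢ` the generator of index `i - 1`) and `F(a,b)` is the free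
group on `Bool`, with `a = of true` and `b = of false`. -/
theorem injective_mu (m : ℕ) :
    Function.Injective
      (FreeGroup.lift (fun i : Fin m =>
        FreeGroup.of true ^ ((i : ℕ) + 1) * FreeGroup.of false ^ ((i : ℕ) + 1) *
          (FreeGroup.of true ^ ((i : ℕ) + 1))⁻¹ *
          (FreeGroup.of false ^ ((i : ℕ) + 1))⁻¹) :
        FreeGroup (Fin m) →* FreeGroup Bool) := by
  have hle : m ≤ m + 2 := by omega
  have hcomp : (FreeGroup.lift (fun i : Fin m =>
        FreeGroup.of true ^ ((i : ℕ) + 1) * FreeGroup.of false ^ ((i : ℕ) + 1) *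
          (FreeGroup.of true ^ ((i : ℕ) + 1))⁻¹ *
          (FreeGroup.of false ^ ((i : ℕ) + 1))⁻¹) :
        FreeGroup (Fin m) →* FreeGroup Bool)
      = (FreeGroup.lift (fun i : Fin (m + 2) =>
        FreeGroup.of true ^ ((i : ℕ) + 1) * FreeGroup.of false ^ ((i : ℕ) + 1) *
          (FreeGroup.of true ^ ((i : ℕ) + 1))⁻¹ *
          (FreeGroup.of false ^ ((i : ℕ) + 1))⁻¹)).comp
        (FreeGroup.map (Fin.castLE hle)) := by
    ext i
    simp
  rw [hcomp, MonoidHom.coe_comp]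
  refine (InjMuAux.injective_aux m).comp ?_
  rcases m with _ | m'
  · intro u v _
    have h1 : ∀ w : FreeGroup (Fin 0), w = 1 := by
      rintro ⟨L⟩
      cases L with
      | nil => rfl
      | cons h t => exact h.1.elim0
    rw [h1 u, h1 v]
  · set r : Fin (m' + 1 + 2) → Fin (m' + 1) :=
      fun i => if h : (i : ℕ) < m' + 1 then ⟨i, h⟩ else 0 with hr
    have hret : ∀ w, FreeGroup.map r (FreeGroup.map (Fin.castLE hle) w) = w := by
      intro w
      rw [FreeGroup.map.comp (Fin.castLE hle) r w]
      have hfun : (r ∘ Fin.castLE hle) = id := by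
        funext i
        simp [hr, i.isLt]
        intro h
        exact absurd i.isLt (by omega)
      rw [hfun]
      exact FreeGroup.map.id w
    exact Function.LeftInverse.injective hret
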